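/- Let u ⊆ {1,…,d} and let x, y, z be independent random vectors, each uniformly distributed on [0,1]^d. Then E[ (f(x) − f(z_u : x_{-u})) · (f(x_u : y_{-u}) − f(y)) ] = τ̲²_u. (This is the defining identity of the 'Correlation 2' estimator, which uses three independent input vectors.) -/

import Mathlib

open MeasureTheory Finset

/-- The uniform (Lebesgue) probability measure on the interval `[0,1]`. -/
noncomputable def unifSeg : Measure ℝ := (volume : Measure ℝ).restrict (Set.Icc 0 1)

/-- The uniform (Lebesgue) product probability measure on the cube `[0,1]^d`. -/
noncomputable def unifCube (d : ℕ) : Measure (Fin d → ℝ) :=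
  Measure.pi fun _ => unifSeg

/-- `glue u x y` is the point whose `j`-th coordinate is `x j` for `j ∈ u`
and `y j` otherwise, i.e. `(x_u : y_{-u})`. -/
def glue {d : ℕ} (u : Finset (Fin d)) (x y : Fin d → ℝ) : Fin d → ℝ :=
  fun j => if j ∈ u then x j else y j

/-- The lower Sobol' index `τ̲²_u` of the set `u`. -/
noncomputable def lowerSobol {d : ℕ} (f : (Fin d → ℝ) → ℝ) (u : Finset (Fin d)) : ℝ :=
  (∫ x, (∫ y, f (glue u x y) ∂(unifCube d)) ^ 2 ∂(unifCube d))
    - (∫ x, f x ∂(unifCube d)) ^ 2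

/-- The variance `σ²` of `f` over the unit cube. -/
noncomputable def sigmaSq {d : ℕ} (f : (Fin d → ℝ) → ℝ) : ℝ :=
  (∫ x, f x ^ 2 ∂(unifCube d)) - (∫ x, f x ∂(unifCube d)) ^ 2

/-- The upper Sobol' index `τ̄²_u = σ² - τ̲²_{uᶜ}` of the set `u`. -/
noncomputable def upperSobol {d : ℕ} (f : (Fin d → ℝ) → ℝ) (u : Finset (Fin d)) : ℝ :=
  sigmaSq f - lowerSobol f uᶜ

section Stmt4Aux

instance : IsProbabilityMeasure unifSeg :=
  ⟨by simp [unifSeg, Real.volume_Icc]⟩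

instance (d : ℕ) : IsProbabilityMeasure (unifCube d) := by
  unfold unifCube; infer_instance

variable {d : ℕ}

lemma glue_glue_left (u : Finset (Fin d)) (x y z : Fin d → ℝ) :
    glue u (glue u x y) z = glue u x z := by
  funext j; by_cases h : j ∈ u <;> simp [glue, h]

/-- The involution of `Fin d ⊕ Fin d` exchanging `inl j` and `inr j` for `j ∉ u`. -/
def swapPerm (u : Finset (Fin d)) : (Fin d ⊕ Fin d) ≃ (Fin d ⊕ Fin d) where
  toFun := Sum.elim (fun j => if j ∈ u then Sum.inl j else Sum.inr j)
    (fun j => if j ∈ u then Sum.inr j else Sum.inl j)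
  invFun := Sum.elim (fun j => if j ∈ u then Sum.inl j else Sum.inr j)
    (fun j => if j ∈ u then Sum.inr j else Sum.inl j)
  left_inv s := by rcases s with j | j <;> by_cases h : j ∈ u <;> simp [h]
  right_inv s := by rcases s with j | j <;> by_cases h : j ∈ u <;> simp [h]

lemma swapPerm_invol (u : Finset (Fin d)) (s : Fin d ⊕ Fin d) :
    swapPerm u (swapPerm u s) = s := by
  rcases s with j | j <;> by_cases h : j ∈ u <;> simp [swapPerm, h]

/-- The map `(x, y) ↦ (glue u x y, glue u y x)` preserves the product measure. -/
lemma mp_glueSwap (u : Finset (Fin d)) :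
    MeasurePreserving (fun p : (Fin d → ℝ) × (Fin d → ℝ) => (glue u p.1 p.2, glue u p.2 p.1))
      ((unifCube d).prod (unifCube d)) ((unifCube d).prod (unifCube d)) := by
  classical
  have h1 : MeasurePreserving (MeasurableEquiv.sumPiEquivProdPi (fun _ : Fin d ⊕ Fin d => ℝ)).symm
      ((unifCube d).prod (unifCube d)) (Measure.pi fun _ : Fin d ⊕ Fin d => unifSeg) :=
    measurePreserving_sumPiEquivProdPi_symm (fun _ => unifSeg)
  have h2 : MeasurePreserving
      (MeasurableEquiv.piCongrLeft (fun _ : Fin d ⊕ Fin d => ℝ) (swapPerm u))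
      (Measure.pi fun _ : Fin d ⊕ Fin d => unifSeg)
      (Measure.pi fun _ : Fin d ⊕ Fin d => unifSeg) :=
    measurePreserving_piCongrLeft (fun _ => unifSeg) (swapPerm u)
  have h3 : MeasurePreserving (MeasurableEquiv.sumPiEquivProdPi (fun _ : Fin d ⊕ Fin d => ℝ))
      (Measure.pi fun _ : Fin d ⊕ Fin d => unifSeg) ((unifCube d).prod (unifCube d)) :=
    h1.symm _
  have hcomp := (h3.comp h2).comp h1
  have hfun : ((⇑(MeasurableEquiv.sumPiEquivProdPi (fun _ : Fin d ⊕ Fin d => ℝ)) ∘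
      ⇑(MeasurableEquiv.piCongrLeft (fun _ : Fin d ⊕ Fin d => ℝ) (swapPerm u))) ∘
      ⇑(MeasurableEquiv.sumPiEquivProdPi (fun _ : Fin d ⊕ Fin d => ℝ)).symm) =
      (fun p : (Fin d → ℝ) × (Fin d → ℝ) => (glue u p.1 p.2, glue u p.2 p.1)) := by
    funext p
    have key : ∀ (g : (Fin d ⊕ Fin d) → ℝ) (s : Fin d ⊕ Fin d),
        Equiv.piCongrLeft (fun _ => ℝ) (swapPerm u) g s = g (swapPerm u s) := by
      intro g s
      conv_lhs => rw [show s = swapPerm u (swapPerm u s) from (swapPerm_invol u s).symm]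
      exact Equiv.piCongrLeft_apply_apply (fun _ => ℝ) (swapPerm u) g (swapPerm u s)
    simp only [Function.comp_apply, MeasurableEquiv.coe_piCongrLeft,
      MeasurableEquiv.coe_sumPiEquivProdPi, MeasurableEquiv.coe_sumPiEquivProdPi_symm]
    refine Prod.ext ?_ ?_ <;> funext j <;>
      · simp only [Equiv.sumPiEquivProdPi_apply, key, Equiv.sumPiEquivProdPi_symm_apply]
        by_cases h : j ∈ u <;> simp [swapPerm, glue, h]
  rwa [hfun] at hcomp

lemma mp_fst' {α β : Type*} [MeasurableSpace α] [MeasurableSpace β]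
    (μ : Measure α) (ν : Measure β) [SFinite μ] [SFinite ν] [IsProbabilityMeasure ν] :
    MeasurePreserving Prod.fst (μ.prod ν) μ :=
  ⟨measurable_fst, by simp⟩

lemma mp_snd' {α β : Type*} [MeasurableSpace α] [MeasurableSpace β]
    (μ : Measure α) (ν : Measure β) [SFinite μ] [SFinite ν] [IsProbabilityMeasure μ] :
    MeasurePreserving Prod.snd (μ.prod ν) ν :=
  ⟨measurable_snd, by simp⟩

lemma integral_comp_mp {α β : Type*} [MeasurableSpace α] [MeasurableSpace β]
    {μ : Measure α} {ν : Measure β} {T : α → β} (h : MeasurePreserving T μ ν)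
    {F : β → ℝ} (hF : AEStronglyMeasurable F ν) :
    ∫ x, F (T x) ∂μ = ∫ y, F y ∂ν := by
  rw [← h.map_eq] at hF
  rw [← integral_map h.measurable.aemeasurable hF, h.map_eq]

lemma integrable_mul_of_memLp2 {α : Type*} [MeasurableSpace α] {μ : Measure α} {F G : α → ℝ}
    (hF : MemLp F 2 μ) (hG : MemLp G 2 μ) : Integrable (fun x => F x * G x) μ := by
  have h : MemLp (F • G) 1 μ :=
    hG.smul hF (hpqr := ⟨by rw [inv_one]; exact ENNReal.inv_two_add_inv_two⟩)
  exact memLp_one_iff_integrable.mp h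

end Stmt4Aux

theorem stmt4 {d : ℕ} (hd : 1 ≤ d) (f : (Fin d → ℝ) → ℝ)
    (hf : MemLp f 2 (unifCube d)) (u : Finset (Fin d)) :
    (∫ x, ∫ y, ∫ z,
        (f x - f (glue u z x)) * (f (glue u x y) - f y)
        ∂(unifCube d) ∂(unifCube d) ∂(unifCube d))
      = lowerSobol f u := by
  classical
  set π : Measure (Fin d → ℝ) := unifCube d with hπ
  -- measure-preserving maps
  have hS : MeasurePreserving
      (fun p : (Fin d → ℝ) × (Fin d → ℝ) => (glue u p.1 p.2, glue u p.2 p.1))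
      (π.prod π) (π.prod π) := mp_glueSwap u
  have hGlue : MeasurePreserving (fun q : (Fin d → ℝ) × (Fin d → ℝ) => glue u q.1 q.2)
      (π.prod π) π := (mp_fst' π π).comp hS
  have hP3fst : MeasurePreserving (Prod.fst)
      ((π.prod π).prod π) (π.prod π) := mp_fst' _ π
  have hA : MeasurePreserving (fun p : ((Fin d → ℝ) × (Fin d → ℝ)) × (Fin d → ℝ) => p.1.1)
      ((π.prod π).prod π) π := (mp_fst' π π).comp hP3fst
  have hE : MeasurePreserving (fun p : ((Fin d → ℝ) × (Fin d → ℝ)) × (Fin d → ℝ) => p.1.2)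
      ((π.prod π).prod π) π := (mp_snd' π π).comp hP3fst
  have hC : MeasurePreserving
      (fun p : ((Fin d → ℝ) × (Fin d → ℝ)) × (Fin d → ℝ) => glue u p.1.1 p.1.2)
      ((π.prod π).prod π) π := hGlue.comp hP3fst
  have hAssoc : MeasurePreserving (⇑(MeasurableEquiv.prodAssoc :
        ((Fin d → ℝ) × (Fin d → ℝ)) × (Fin d → ℝ) ≃ᵐ _))
      ((π.prod π).prod π) (π.prod (π.prod π)) := measurePreserving_prodAssoc π π π
  have hAssocSymm : MeasurePreserving (⇑(MeasurableEquiv.prodAssoc :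
        ((Fin d → ℝ) × (Fin d → ℝ)) × (Fin d → ℝ) ≃ᵐ _).symm)
      (π.prod (π.prod π)) ((π.prod π).prod π) :=
    (measurePreserving_prodAssoc π π π).symm MeasurableEquiv.prodAssoc
  have hRho : MeasurePreserving
      (fun p : ((Fin d → ℝ) × (Fin d → ℝ)) × (Fin d → ℝ) => ((p.2, p.1.1), p.1.2))
      ((π.prod π).prod π) ((π.prod π).prod π) := hAssocSymm.comp Measure.measurePreserving_swap
  have hB : MeasurePreserving
      (fun p : ((Fin d → ℝ) × (Fin d → ℝ)) × (Fin d → ℝ) => glue u p.2 p.1.1)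
      ((π.prod π).prod π) π := hGlue.comp (hP3fst.comp hRho)
  have hR : MeasurePreserving
      (fun p : ((Fin d → ℝ) × (Fin d → ℝ)) × (Fin d → ℝ) => (glue u p.2 p.1.1, p.1.2))
      ((π.prod π).prod π) (π.prod π) :=
    (hGlue.prod (MeasurePreserving.id π)).comp hRho
  have hPsi : MeasurePreserving
      (fun p : ((Fin d → ℝ) × (Fin d → ℝ)) × (Fin d → ℝ) =>
        ((glue u p.2 p.1.1, glue u p.1.1 p.2), p.1.2))
      ((π.prod π).prod π) ((π.prod π).prod π) :=
    (hS.prod (MeasurePreserving.id π)).comp hRho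
  have hJ2 : MeasurePreserving
      (fun p : ((Fin d → ℝ) × (Fin d → ℝ)) × (Fin d → ℝ) => glue u p.1.2 p.2)
      ((π.prod π).prod π) π :=
    hGlue.comp ((mp_snd' π π).prod (MeasurePreserving.id π))
  have hQfst : MeasurePreserving (Prod.fst) (π.prod (π.prod π)) π := mp_fst' π _
  have hKg : MeasurePreserving
      (fun q : (Fin d → ℝ) × ((Fin d → ℝ) × (Fin d → ℝ)) => glue u q.2.1 q.2.2)
      (π.prod (π.prod π)) π := hGlue.comp (mp_snd' π _)
  have hH1 : MeasurePreserving
      (fun q : (Fin d → ℝ) × ((Fin d → ℝ) × (Fin d → ℝ)) => glue u q.1 q.2.1)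
      (π.prod (π.prod π)) π :=
    hGlue.comp ((MeasurePreserving.id π).prod (mp_fst' π π))
  have hH2 : MeasurePreserving
      (fun q : (Fin d → ℝ) × ((Fin d → ℝ) × (Fin d → ℝ)) => glue u q.1 q.2.2)
      (π.prod (π.prod π)) π :=
    hGlue.comp ((MeasurePreserving.id π).prod (mp_snd' π π))
  have hLam : MeasurePreserving
      (fun r : (Fin d → ℝ) × ((Fin d → ℝ) × (Fin d → ℝ)) => (glue u r.1 r.2.1, r.2.2))
      (π.prod (π.prod π)) (π.prod π) :=
    (hGlue.prod (MeasurePreserving.id π)).comp hAssocSymm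
  -- square-integrability of the various compositions
  have ha := hf.comp_measurePreserving hA
  have hb := hf.comp_measurePreserving hB
  have hc := hf.comp_measurePreserving hC
  have he := hf.comp_measurePreserving hE
  have hj2 := hf.comp_measurePreserving hJ2
  have h1 := hf.comp_measurePreserving (mp_fst' π π)
  have h2 := hf.comp_measurePreserving (mp_snd' π π)
  have hg := hf.comp_measurePreserving hGlue
  have hk1 := hf.comp_measurePreserving hQfst
  have hk2 := hf.comp_measurePreserving hKg
  have hh1 := hf.comp_measurePreserving hH1
  have hh2 := hf.comp_measurePreserving hH2
  -- integrability of the products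
  have hFint : Integrable (fun p : ((Fin d → ℝ) × (Fin d → ℝ)) × (Fin d → ℝ) =>
      (f p.1.1 - f (glue u p.2 p.1.1)) * (f (glue u p.1.1 p.1.2) - f p.1.2))
      ((π.prod π).prod π) := integrable_mul_of_memLp2 (ha.sub hb) (hc.sub he)
  have iac : Integrable (fun p : ((Fin d → ℝ) × (Fin d → ℝ)) × (Fin d → ℝ) =>
      f p.1.1 * f (glue u p.1.1 p.1.2)) ((π.prod π).prod π) := integrable_mul_of_memLp2 ha hc
  have iae : Integrable (fun p : ((Fin d → ℝ) × (Fin d → ℝ)) × (Fin d → ℝ) =>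
      f p.1.1 * f p.1.2) ((π.prod π).prod π) := integrable_mul_of_memLp2 ha he
  have ibc : Integrable (fun p : ((Fin d → ℝ) × (Fin d → ℝ)) × (Fin d → ℝ) =>
      f (glue u p.2 p.1.1) * f (glue u p.1.1 p.1.2)) ((π.prod π).prod π) :=
    integrable_mul_of_memLp2 hb hc
  have ibe : Integrable (fun p : ((Fin d → ℝ) × (Fin d → ℝ)) × (Fin d → ℝ) =>
      f (glue u p.2 p.1.1) * f p.1.2) ((π.prod π).prod π) := integrable_mul_of_memLp2 hb he
  have iJ : Integrable (fun p : ((Fin d → ℝ) × (Fin d → ℝ)) × (Fin d → ℝ) =>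
      f p.1.1 * f (glue u p.1.2 p.2)) ((π.prod π).prod π) := integrable_mul_of_memLp2 ha hj2
  have i12 : Integrable (fun q : (Fin d → ℝ) × (Fin d → ℝ) => f q.1 * f q.2) (π.prod π) :=
    integrable_mul_of_memLp2 h1 h2
  have iT : Integrable (fun q : (Fin d → ℝ) × (Fin d → ℝ) => f q.1 * f (glue u q.1 q.2))
      (π.prod π) := integrable_mul_of_memLp2 h1 hg
  have iK : Integrable (fun r : (Fin d → ℝ) × ((Fin d → ℝ) × (Fin d → ℝ)) =>
      f r.1 * f (glue u r.2.1 r.2.2)) (π.prod (π.prod π)) := integrable_mul_of_memLp2 hk1 hk2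
  have iH : Integrable (fun r : (Fin d → ℝ) × ((Fin d → ℝ) × (Fin d → ℝ)) =>
      f (glue u r.1 r.2.1) * f (glue u r.1 r.2.2)) (π.prod (π.prod π)) :=
    integrable_mul_of_memLp2 hh1 hh2
  -- notation for the mean
  set M : ℝ := ∫ x, f x ∂π with hM
  -- Step 1 : rewrite the iterated integral as an integral over the triple product
  have step1 : (∫ x, ∫ y, ∫ z,
        (f x - f (glue u z x)) * (f (glue u x y) - f y) ∂π ∂π ∂π)
      = ∫ p, (f p.1.1 - f (glue u p.2 p.1.1)) * (f (glue u p.1.1 p.1.2) - f p.1.2)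
          ∂((π.prod π).prod π) := by
    rw [integral_prod _ hFint, integral_prod _ hFint.integral_prod_left]
  -- Step 2 : expand the product
  have expand : (fun p : ((Fin d → ℝ) × (Fin d → ℝ)) × (Fin d → ℝ) =>
      (f p.1.1 - f (glue u p.2 p.1.1)) * (f (glue u p.1.1 p.1.2) - f p.1.2))
      = fun p : ((Fin d → ℝ) × (Fin d → ℝ)) × (Fin d → ℝ) =>
        f p.1.1 * f (glue u p.1.1 p.1.2) - f p.1.1 * f p.1.2
          - f (glue u p.2 p.1.1) * f (glue u p.1.1 p.1.2)
          + f (glue u p.2 p.1.1) * f p.1.2 := by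
    funext p; ring
  have step2 : (∫ p, (f p.1.1 - f (glue u p.2 p.1.1)) * (f (glue u p.1.1 p.1.2) - f p.1.2)
        ∂((π.prod π).prod π))
      = (∫ p, f p.1.1 * f (glue u p.1.1 p.1.2) ∂((π.prod π).prod π))
        - (∫ p, f p.1.1 * f p.1.2 ∂((π.prod π).prod π))
        - (∫ p, f (glue u p.2 p.1.1) * f (glue u p.1.1 p.1.2) ∂((π.prod π).prod π))
        + (∫ p, f (glue u p.2 p.1.1) * f p.1.2 ∂((π.prod π).prod π)) := by
    have isub1 : Integrable (fun p : ((Fin d → ℝ) × (Fin d → ℝ)) × (Fin d → ℝ) =>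
        f p.1.1 * f (glue u p.1.1 p.1.2) - f p.1.1 * f p.1.2) ((π.prod π).prod π) :=
      iac.sub iae
    have isub2 : Integrable (fun p : ((Fin d → ℝ) × (Fin d → ℝ)) × (Fin d → ℝ) =>
        f p.1.1 * f (glue u p.1.1 p.1.2) - f p.1.1 * f p.1.2
          - f (glue u p.2 p.1.1) * f (glue u p.1.1 p.1.2)) ((π.prod π).prod π) :=
      isub1.sub ibc
    rw [expand, integral_add isub2 ibe, integral_sub isub1 ibc, integral_sub iac iae]
  -- the mean of the glued function
  have hgM : (∫ q : (Fin d → ℝ) × (Fin d → ℝ), f (glue u q.1 q.2) ∂(π.prod π)) = M :=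
    integral_comp_mp hGlue hf.1
  -- evaluation of the four terms
  have eval_ae : (∫ p, f p.1.1 * f p.1.2 ∂((π.prod π).prod π)) = M * M := by
    have h := integral_comp_mp hP3fst
      (F := fun q : (Fin d → ℝ) × (Fin d → ℝ) => f q.1 * f q.2) i12.aestronglyMeasurable
    exact h.trans (integral_prod_mul f f)
  have eval_be : (∫ p, f (glue u p.2 p.1.1) * f p.1.2 ∂((π.prod π).prod π)) = M * M := by
    have h := integral_comp_mp hR
      (F := fun q : (Fin d → ℝ) × (Fin d → ℝ) => f q.1 * f q.2) i12.aestronglyMeasurable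
    exact h.trans (integral_prod_mul f f)
  have eval_bc : (∫ p, f (glue u p.2 p.1.1) * f (glue u p.1.1 p.1.2) ∂((π.prod π).prod π))
      = M * M := by
    have hbc1 : (fun p : ((Fin d → ℝ) × (Fin d → ℝ)) × (Fin d → ℝ) =>
        f (glue u p.2 p.1.1) * f (glue u p.1.1 p.1.2))
        = (fun p : ((Fin d → ℝ) × (Fin d → ℝ)) × (Fin d → ℝ) =>
          (fun q : ((Fin d → ℝ) × (Fin d → ℝ)) × (Fin d → ℝ) =>
            f q.1.1 * f (glue u q.1.2 q.2)) ((glue u p.2 p.1.1, glue u p.1.1 p.2), p.1.2)) := by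
      funext p
      simp only [glue_glue_left]
    have hbc2 := integral_comp_mp hPsi
      (F := fun q : ((Fin d → ℝ) × (Fin d → ℝ)) × (Fin d → ℝ) =>
        f q.1.1 * f (glue u q.1.2 q.2)) iJ.aestronglyMeasurable
    have hbc3 := integral_comp_mp hAssoc
      (F := fun r : (Fin d → ℝ) × ((Fin d → ℝ) × (Fin d → ℝ)) =>
        f r.1 * f (glue u r.2.1 r.2.2)) iK.aestronglyMeasurable
    have hbc4 : (∫ r, f r.1 * f (glue u r.2.1 r.2.2) ∂(π.prod (π.prod π))) = M * M := by
      have h := integral_prod_mul (μ := π) (ν := π.prod π) f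
        (fun q : (Fin d → ℝ) × (Fin d → ℝ) => f (glue u q.1 q.2))
      rw [hgM] at h
      exact h
    calc (∫ p, f (glue u p.2 p.1.1) * f (glue u p.1.1 p.1.2) ∂((π.prod π).prod π))
        = ∫ p, (fun q : ((Fin d → ℝ) × (Fin d → ℝ)) × (Fin d → ℝ) =>
            f q.1.1 * f (glue u q.1.2 q.2)) ((glue u p.2 p.1.1, glue u p.1.1 p.2), p.1.2)
            ∂((π.prod π).prod π) := by rw [hbc1]
      _ = ∫ q, f q.1.1 * f (glue u q.1.2 q.2) ∂((π.prod π).prod π) := hbc2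
      _ = ∫ r, f r.1 * f (glue u r.2.1 r.2.2) ∂(π.prod (π.prod π)) := hbc3
      _ = M * M := hbc4
  have eval_ac : (∫ p, f p.1.1 * f (glue u p.1.1 p.1.2) ∂((π.prod π).prod π))
      = ∫ x, (∫ y, f (glue u x y) ∂π) ^ 2 ∂π := by
    have e1 := integral_comp_mp hP3fst
      (F := fun q : (Fin d → ℝ) × (Fin d → ℝ) => f q.1 * f (glue u q.1 q.2))
      iT.aestronglyMeasurable
    have e2 := integral_comp_mp hLam
      (F := fun q : (Fin d → ℝ) × (Fin d → ℝ) => f q.1 * f (glue u q.1 q.2))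
      iT.aestronglyMeasurable
    have e3 : (fun r : (Fin d → ℝ) × ((Fin d → ℝ) × (Fin d → ℝ)) =>
        (fun q : (Fin d → ℝ) × (Fin d → ℝ) => f q.1 * f (glue u q.1 q.2))
          (glue u r.1 r.2.1, r.2.2))
        = fun r : (Fin d → ℝ) × ((Fin d → ℝ) × (Fin d → ℝ)) =>
          f (glue u r.1 r.2.1) * f (glue u r.1 r.2.2) := by
      funext r
      simp only [glue_glue_left]
    rw [e3] at e2
    have e4 : (∫ r, f (glue u r.1 r.2.1) * f (glue u r.1 r.2.2) ∂(π.prod (π.prod π)))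
        = ∫ x, ∫ q, f (glue u x q.1) * f (glue u x q.2) ∂(π.prod π) ∂π := integral_prod _ iH
    have e5 : ∀ x, (∫ q, f (glue u x q.1) * f (glue u x q.2) ∂(π.prod π))
        = (∫ y, f (glue u x y) ∂π) ^ 2 := by
      intro x
      rw [pow_two]
      exact integral_prod_mul (fun y => f (glue u x y)) (fun w => f (glue u x w))
    calc (∫ p, f p.1.1 * f (glue u p.1.1 p.1.2) ∂((π.prod π).prod π))
        = ∫ q, f q.1 * f (glue u q.1 q.2) ∂(π.prod π) := e1
      _ = ∫ r, f (glue u r.1 r.2.1) * f (glue u r.1 r.2.2) ∂(π.prod (π.prod π)) := e2.symm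
      _ = ∫ x, ∫ q, f (glue u x q.1) * f (glue u x q.2) ∂(π.prod π) ∂π := e4
      _ = ∫ x, (∫ y, f (glue u x y) ∂π) ^ 2 ∂π := by simp only [e5]
  -- assemble
  rw [step1, step2, eval_ac, eval_ae, eval_bc, eval_be]
  simp only [lowerSobol, ← hπ, ← hM]
  ring
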